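/- For all real x with 0 ≤ x ≤ 1, (2/π)·arccos(1 − x) ≥ (2/3)·√x + (1/3)·x, with equality if and only if x = 0 or x = 1. -/

import Mathlib

open Real Set

noncomputable def auxF (s : ℝ) : ℝ :=
  2 * Real.arcsin s - (Real.pi / 3) * (Real.sqrt 2 * s + s ^ 2)

noncomputable def auxP (s : ℝ) : ℝ :=
  2 / Real.sqrt (1 - s ^ 2) - (Real.pi / 3) * (Real.sqrt 2 + 2 * s)

lemma sqrt2_lt_two : Real.sqrt 2 < 2 := by
  nlinarith [Real.sq_sqrt (by norm_num : (0:ℝ) ≤ 2), Real.sqrt_nonneg 2]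

lemma sqrt2_pos : (0:ℝ) < Real.sqrt 2 := Real.sqrt_pos.2 (by norm_num)

lemma sqrt_half : Real.sqrt (1/2) = Real.sqrt 2 / 2 := by
  rw [show (1:ℝ)/2 = (Real.sqrt 2 / 2) ^ 2 by
      rw [div_pow, Real.sq_sqrt (by norm_num : (0:ℝ) ≤ 2)]; norm_num]
  exact Real.sqrt_sq (by positivity)

lemma auxF_hasDeriv {s : ℝ} (h1 : s ≠ -1) (h2 : s ≠ 1) :
    HasDerivAt auxF (auxP s) s := by
  have ha := (Real.hasDerivAt_arcsin h1 h2).const_mul 2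
  have hb : HasDerivAt (fun t : ℝ => (Real.pi / 3) * (Real.sqrt 2 * t + t ^ 2))
      ((Real.pi / 3) * (Real.sqrt 2 + 2 * s)) s := by
    have := (((hasDerivAt_id s).const_mul (Real.sqrt 2)).add (hasDerivAt_pow 2 s)).const_mul
      (Real.pi / 3)
    refine this.congr_deriv ?_
    push_cast; ring
  have := ha.sub hb
  refine this.congr_deriv ?_
  unfold auxP; ring

lemma one_sub_sq_pos {s : ℝ} (h0 : -1 < s) (h1 : s < 1) : 0 < 1 - s ^ 2 := by nlinarith

lemma auxP_hasDeriv {s : ℝ} (h0 : -1 < s) (h1 : s < 1) :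
    HasDerivAt auxP (2 * s / (Real.sqrt (1 - s ^ 2)) ^ 3 - 2 * Real.pi / 3) s := by
  have hpos : 0 < 1 - s ^ 2 := one_sub_sq_pos h0 h1
  have hspos : 0 < Real.sqrt (1 - s ^ 2) := Real.sqrt_pos.2 hpos
  have hinner : HasDerivAt (fun t : ℝ => 1 - t ^ 2) (-(2 * s)) s := by
    have := (hasDerivAt_pow 2 s).const_sub 1
    refine this.congr_deriv ?_; push_cast; ring
  have hsqrt : HasDerivAt (fun t : ℝ => Real.sqrt (1 - t ^ 2))
      (1 / (2 * Real.sqrt (1 - s ^ 2)) * (-(2 * s))) s :=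
    (Real.hasDerivAt_sqrt (ne_of_gt hpos)).comp s hinner
  have hdiv : HasDerivAt (fun t : ℝ => 2 / Real.sqrt (1 - t ^ 2))
      ((0 * Real.sqrt (1 - s ^ 2) - 2 * (1 / (2 * Real.sqrt (1 - s ^ 2)) * (-(2 * s)))) /
        (Real.sqrt (1 - s ^ 2)) ^ 2) s :=
    (hasDerivAt_const s 2).div hsqrt (ne_of_gt hspos)
  have hlin : HasDerivAt (fun t : ℝ => (Real.pi / 3) * (Real.sqrt 2 + 2 * t))
      ((Real.pi / 3) * 2) s := by
    have := (((hasDerivAt_id s).const_mul 2).const_add (Real.sqrt 2)).const_mul (Real.pi / 3)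
    refine this.congr_deriv ?_; ring
  have heq : (0 * Real.sqrt (1 - s ^ 2) - 2 * (1 / (2 * Real.sqrt (1 - s ^ 2)) * (-(2 * s)))) /
      (Real.sqrt (1 - s ^ 2)) ^ 2 - Real.pi / 3 * 2 =
      2 * s / (Real.sqrt (1 - s ^ 2)) ^ 3 - 2 * Real.pi / 3 := by
    have hg : Real.sqrt (1 - s ^ 2) ≠ 0 := ne_of_gt hspos
    field_simp
    linear_combination
  have := hdiv.sub hlin
  rw [heq] at this
  exact this

lemma auxF_cont : Continuous auxF := by
  unfold auxF
  exact (continuous_const.mul Real.continuous_arcsin).sub (continuous_const.mul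
    ((continuous_const.mul continuous_id).add (continuous_pow 2)))

lemma deriv_auxF {s : ℝ} (h0 : -1 < s) (h1 : s < 1) : deriv auxF s = auxP s :=
  (auxF_hasDeriv (by linarith) (by linarith)).deriv

lemma auxP_cont : ContinuousOn auxP (Icc 0 (Real.sqrt 2 / 2)) := by
  apply ContinuousOn.sub
  · apply continuousOn_const.div
    · fun_prop
    · intro s hs
      have h1 : s < 1 := lt_of_le_of_lt hs.2 (by nlinarith [sqrt2_lt_two])
      have := one_sub_sq_pos (by linarith [hs.1]) h1
      positivity
  · fun_prop

lemma auxP_convex : StrictConvexOn ℝ (Icc 0 (Real.sqrt 2 / 2)) auxP := by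
  apply StrictMonoOn.strictConvexOn_of_deriv (convex_Icc _ _) auxP_cont
  rw [interior_Icc]
  intro s hs t ht hst
  have hb1 : Real.sqrt 2 / 2 < 1 := by nlinarith [sqrt2_lt_two]
  have hs1 : s < 1 := lt_trans hs.2 hb1
  have ht1 : t < 1 := lt_trans ht.2 hb1
  rw [(auxP_hasDeriv (by linarith [hs.1]) hs1).deriv,
      (auxP_hasDeriv (by linarith [ht.1]) ht1).deriv]
  have hps : 0 < 1 - s ^ 2 := one_sub_sq_pos (by linarith [hs.1]) hs1
  have hpt : 0 < 1 - t ^ 2 := one_sub_sq_pos (by linarith [ht.1]) ht1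
  have hsq : Real.sqrt (1 - t ^ 2) ≤ Real.sqrt (1 - s ^ 2) :=
    Real.sqrt_le_sqrt (by nlinarith [hs.1])
  have hsqt : 0 < Real.sqrt (1 - t ^ 2) := Real.sqrt_pos.2 hpt
  have h3 : (Real.sqrt (1 - t ^ 2)) ^ 3 ≤ (Real.sqrt (1 - s ^ 2)) ^ 3 :=
    pow_le_pow_left₀ hsqt.le hsq 3
  have hd : 0 < (Real.sqrt (1 - t ^ 2)) ^ 3 := by positivity
  have : 2 * s / (Real.sqrt (1 - s ^ 2)) ^ 3 < 2 * t / (Real.sqrt (1 - t ^ 2)) ^ 3 :=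
    div_lt_div₀ (by linarith) h3 (by linarith [ht.1]) hd
  linarith

lemma auxF_zero : auxF 0 = 0 := by simp [auxF]

lemma arcsin_b : Real.arcsin (Real.sqrt 2 / 2) = Real.pi / 4 := by
  rw [← Real.sin_pi_div_four, Real.arcsin_sin] <;> linarith [Real.pi_pos]

lemma auxF_b : auxF (Real.sqrt 2 / 2) = 0 := by
  unfold auxF
  rw [arcsin_b]
  have h2 : Real.sqrt 2 * Real.sqrt 2 = 2 := Real.mul_self_sqrt (by norm_num)
  have e : Real.sqrt 2 * (Real.sqrt 2 / 2) + (Real.sqrt 2 / 2) ^ 2 = 3 / 2 := by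
    linear_combination (3/4) * h2
  rw [e]
  ring

lemma auxP_b_neg : auxP (Real.sqrt 2 / 2) < 0 := by
  unfold auxP
  have h2 : Real.sqrt 2 * Real.sqrt 2 = 2 := Real.mul_self_sqrt (by norm_num)
  have hb : Real.sqrt (1 - (Real.sqrt 2 / 2) ^ 2) = Real.sqrt 2 / 2 := by
    rw [show 1 - (Real.sqrt 2 / 2) ^ 2 = 1/2 by nlinarith [h2]]
    exact sqrt_half
  rw [hb]
  have h4 : 2 / (Real.sqrt 2 / 2) = 2 * Real.sqrt 2 := by
    rw [div_eq_iff (by positivity : Real.sqrt 2 / 2 ≠ 0)]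
    linear_combination -h2
  rw [h4]
  nlinarith [mul_pos (show (0:ℝ) < Real.pi - 3 by linarith [Real.pi_gt_three]) sqrt2_pos]

lemma auxF_pos {t : ℝ} (ht0 : 0 < t) (htb : t < Real.sqrt 2 / 2) : 0 < auxF t := by
  set b := Real.sqrt 2 / 2 with hbdef
  have hb1 : b < 1 := by rw [hbdef]; nlinarith [sqrt2_lt_two]
  by_cases hA : ∀ s ∈ Ioo 0 t, 0 < auxP s
  · have mono : StrictMonoOn auxF (Icc 0 t) := by
      apply strictMonoOn_of_deriv_pos (convex_Icc 0 t) auxF_cont.continuousOn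
      rw [interior_Icc]
      intro s hs
      rw [deriv_auxF (by linarith [hs.1]) (by linarith [hs.2, htb, hb1])]
      exact hA s hs
    have := mono (left_mem_Icc.2 ht0.le) (right_mem_Icc.2 ht0.le) ht0
    rwa [auxF_zero] at this
  · push_neg at hA
    obtain ⟨s0, hs0, hP0⟩ := hA
    have hs0b : s0 < b := lt_trans hs0.2 htb
    have hneg : ∀ u ∈ Ioo s0 b, auxP u < 0 := by
      intro u hu
      have hbs : 0 < b - s0 := by linarith [hu.1, hu.2]
      set a := (b - u) / (b - s0) with hadef
      set c := (u - s0) / (b - s0) with hcdef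
      have ha : 0 < a := by apply div_pos <;> linarith [hu.2]
      have hc : 0 < c := by apply div_pos <;> linarith [hu.1]
      have hac : a + c = 1 := by
        rw [hadef, hcdef, ← add_div, div_eq_one_iff_eq (ne_of_gt hbs)]
        ring
      have hcomb : a * s0 + c * b = u := by
        rw [hadef, hcdef]
        field_simp
        ring
      have hmem1 : s0 ∈ Icc 0 b := ⟨hs0.1.le, hs0b.le⟩
      have hmem2 : b ∈ Icc 0 b := ⟨by positivity, le_refl b⟩
      have := auxP_convex.2 hmem1 hmem2 (ne_of_lt hs0b) ha hc hac
      simp only [smul_eq_mul] at this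
      rw [hcomb] at this
      nlinarith [auxP_b_neg]
    have anti : StrictAntiOn auxF (Icc s0 b) := by
      apply strictAntiOn_of_deriv_neg (convex_Icc s0 b) auxF_cont.continuousOn
      rw [interior_Icc]
      intro u hu
      rw [deriv_auxF (by linarith [hs0.1, hu.1]) (by linarith [hu.2])]
      exact hneg u hu
    have htmem : t ∈ Icc s0 b := ⟨hs0.2.le, htb.le⟩
    have hbmem : b ∈ Icc s0 b := ⟨hs0b.le, le_refl b⟩
    have := anti htmem hbmem htb
    rwa [auxF_b] at this

/-- For `0 ≤ x ≤ 1`: `(2/π) arccos (1-x) ≥ (2/3)√x + (1/3)x`, with equality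
iff `x = 0` or `x = 1`. -/
theorem stmt6 (x : ℝ) (h0 : 0 ≤ x) (h1 : x ≤ 1) :
    (2 / 3) * Real.sqrt x + (1 / 3) * x ≤ (2 / Real.pi) * Real.arccos (1 - x) ∧
      ((2 / Real.pi) * Real.arccos (1 - x) = (2 / 3) * Real.sqrt x + (1 / 3) * x ↔
        x = 0 ∨ x = 1) := by
  have hπ : 0 < Real.pi := Real.pi_pos
  set s := Real.sqrt (x / 2) with hsdef
  have hs0 : 0 ≤ s := Real.sqrt_nonneg _
  have hs2 : s ^ 2 = x / 2 := Real.sq_sqrt (by linarith)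
  have hx2 : x = 2 * s ^ 2 := by rw [hs2]; ring
  have hsb : s ≤ Real.sqrt 2 / 2 := by
    rw [hsdef, ← sqrt_half]
    exact Real.sqrt_le_sqrt (by linarith)
  have hb1 : Real.sqrt 2 / 2 < 1 := by nlinarith [sqrt2_lt_two]
  have hs1 : s ≤ 1 := hsb.trans hb1.le
  have hsx : Real.sqrt x = Real.sqrt 2 * s := by
    rw [hsdef, ← Real.sqrt_mul (by norm_num : (0:ℝ) ≤ 2) (x / 2)]
    congr 1
    ring
  have harccos : Real.arccos (1 - x) = 2 * Real.arcsin s := by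
    have hcos : Real.cos (2 * Real.arcsin s) = 1 - x := by
      rw [Real.cos_two_mul, Real.cos_arcsin,
        Real.sq_sqrt (by nlinarith : (0:ℝ) ≤ 1 - s ^ 2)]
      linarith [hx2]
    rw [← hcos, Real.arccos_cos]
    · linarith [Real.arcsin_nonneg.2 hs0]
    · linarith [Real.arcsin_le_pi_div_two s]
  have key : (2 / Real.pi) * Real.arccos (1 - x) -
      ((2 / 3) * Real.sqrt x + (1 / 3) * x) = (2 / Real.pi) * auxF s := by
    rw [harccos, hsx, hx2]
    unfold auxF
    field_simp
  have hFs : 0 ≤ auxF s ∧ (auxF s = 0 ↔ x = 0 ∨ x = 1) := by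
    rcases eq_or_lt_of_le h0 with hx0 | hx0
    · have hs : s = 0 := by rw [hsdef, ← hx0]; norm_num
      refine ⟨by rw [hs, auxF_zero], ?_, fun _ => by rw [hs, auxF_zero]⟩
      intro _
      exact Or.inl hx0.symm
    · rcases eq_or_lt_of_le h1 with hx1 | hx1
      · have hs : s = Real.sqrt 2 / 2 := by rw [hsdef, hx1]; exact sqrt_half
        refine ⟨by rw [hs, auxF_b], ?_, fun _ => by rw [hs, auxF_b]⟩
        intro _
        exact Or.inr hx1
      · have hspos : 0 < s := Real.sqrt_pos.2 (by linarith)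
        have hslt : s < Real.sqrt 2 / 2 := by
          rw [hsdef, ← sqrt_half]
          exact Real.sqrt_lt_sqrt (by linarith) (by linarith)
        have hpos := auxF_pos hspos hslt
        constructor
        · exact hpos.le
        · constructor
          · intro h; exact absurd h (ne_of_gt hpos)
          · rintro (h | h) <;> [exact absurd h (ne_of_gt hx0); exact absurd h (ne_of_lt hx1)]
  obtain ⟨hFnn, hFiff⟩ := hFs
  constructor
  · nlinarith [mul_nonneg (by positivity : (0:ℝ) ≤ 2 / Real.pi) hFnn]
  · rw [← sub_eq_zero, key]
    rw [mul_eq_zero]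
    constructor
    · rintro (h | h)
      · exact absurd h (by positivity)
      · exact hFiff.1 h
    · intro h; right; exact hFiff.2 h
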